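/- The Laufer operator x on the lattice of a connected negative definite graph satisfies: (1) monotonicity: if m_n(Z₁) ≤ m_n(Z₂) for all n ∈ 𝒩 then x(Z₁) ≤ x(Z₂); (2) idempotence: x(x(Z)) = x(Z); (3) if Z ∈ L and Z' ∈ L ⊗ ℚ satisfy m_n(Z) = m_n(Z') for all n ∈ 𝒩 and (Z', E_v) = 0 for all v ∈ 𝒱 \ 𝒩, then x(Z) ≥ Z', with equality when Z' ∈ L. -/

import Mathlib

/-- `x` is the Laufer cycle `x(Z)` of `Z` (relative to the graph with intersection matrix `I`
and the subset `N` of vertices): it agrees with `Z` on `N`, has `(x, E_v) ≤ 0` off `N`, and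
is coordinatewise minimal with these properties. -/
def IsLauferOf {V : Type*} [Fintype V] (I : Matrix V V ℤ) (N : Set V)
    (Z x : V → ℤ) : Prop :=
  (∀ n ∈ N, x n = Z n) ∧ (∀ v ∉ N, ∑ w, I v w * x w ≤ 0) ∧
  ∀ y : V → ℤ, (∀ n ∈ N, y n = Z n) → (∀ v ∉ N, ∑ w, I v w * y w ≤ 0) → x ≤ y

/-- Positivity of dual cycles (rational version): if `W` vanishes on `N` and pairs
nonpositively with each `E_v` off `N`, then `W ≥ 0`. -/
lemma laufer_pos_key {V : Type*} [Fintype V] [DecidableEq V]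
    (I : Matrix V V ℤ)
    (hoff : ∀ v w : V, v ≠ w → 0 ≤ I v w)
    (hnegdef : ∀ x : V → ℚ, x ≠ 0 → ∑ v, ∑ w, x v * (I v w : ℚ) * x w < 0)
    (N : Set V) (W : V → ℚ)
    (hN : ∀ n ∈ N, W n = 0)
    (hle : ∀ v ∉ N, ∑ w, (I v w : ℚ) * W w ≤ 0) :
    ∀ v, 0 ≤ W v := by
  set Wm : V → ℚ := fun v => max (-W v) 0 with hWm
  set Wp : V → ℚ := fun v => max (W v) 0 with hWp
  have hsplit : ∀ v, Wm v = Wp v - W v := by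
    intro v
    rcases le_total (W v) 0 with h | h
    · simp [hWm, hWp, max_eq_left (neg_nonneg.mpr h), max_eq_right h, zero_sub]
    · simp [hWm, hWp, max_eq_right (neg_nonpos.mpr h), max_eq_left h, sub_self]
  have hWm0 : Wm = 0 := by
    by_contra hne
    have hQ := hnegdef Wm hne
    have hA : (0:ℚ) ≤ ∑ v, ∑ w, Wm v * (I v w : ℚ) * Wp w := by
      apply Finset.sum_nonneg; intro v _
      apply Finset.sum_nonneg; intro w _
      rcases eq_or_ne v w with rfl | hvw
      · rcases le_total (W v) 0 with h | h
        · have : Wp v = 0 := by simp [hWp, max_eq_right h]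
          simp [this]
        · have : Wm v = 0 := by simp [hWm, max_eq_right (neg_nonpos.mpr h)]
          simp [this]
      · have h1 : (0:ℚ) ≤ Wm v := le_max_right _ _
        have h2 : (0:ℚ) ≤ Wp w := le_max_right _ _
        have h3 : (0:ℚ) ≤ (I v w : ℚ) := by exact_mod_cast hoff v w hvw
        positivity
    have hB : ∑ v, Wm v * ∑ w, (I v w : ℚ) * W w ≤ 0 := by
      apply Finset.sum_nonpos; intro v _
      rcases le_total (W v) 0 with h | h
      · rcases eq_or_lt_of_le h with h' | h'
        · have : Wm v = 0 := by simp [hWm, h']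
          simp [this]
        · have hvN : v ∉ N := fun hv => absurd (hN v hv) (ne_of_lt h')
          exact mul_nonpos_of_nonneg_of_nonpos (le_max_right _ _) (hle v hvN)
      · have : Wm v = 0 := by simp [hWm, max_eq_right (neg_nonpos.mpr h)]
        simp [this]
    have hcalc : ∑ v, ∑ w, Wm v * (I v w : ℚ) * Wm w
        = (∑ v, ∑ w, Wm v * (I v w : ℚ) * Wp w)
          - ∑ v, Wm v * ∑ w, (I v w : ℚ) * W w := by
      rw [← Finset.sum_sub_distrib]
      apply Finset.sum_congr rfl; intro v _
      rw [Finset.mul_sum, ← Finset.sum_sub_distrib]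
      apply Finset.sum_congr rfl; intro w _
      rw [hsplit w]; ring
    have : (0:ℚ) ≤ ∑ v, ∑ w, Wm v * (I v w : ℚ) * Wm w := by
      rw [hcalc]; linarith
    linarith
  intro v
  have h := congrFun hWm0 v
  simp only [hWm, Pi.zero_apply] at h
  have h2 : -W v ≤ max (-W v) 0 := le_max_left _ _
  rw [h] at h2
  linarith

theorem stmt14 {V : Type*} [Fintype V] [DecidableEq V]
    (I : Matrix V V ℤ)
    (hsym : I.IsSymm)
    (hdiag : ∀ v : V, I v v < 0)
    (hoff : ∀ v w : V, v ≠ w → 0 ≤ I v w)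
    (hnegdef : ∀ x : V → ℚ, x ≠ 0 → ∑ v, ∑ w, x v * (I v w : ℚ) * x w < 0)
    (hconn : ∀ v w : V, Relation.ReflTransGen (fun a b : V => a ≠ b ∧ I a b ≠ 0) v w)
    (N : Set V) :
    (∀ Z₁ Z₂ x₁ x₂ : V → ℤ, IsLauferOf I N Z₁ x₁ → IsLauferOf I N Z₂ x₂ →
      (∀ n ∈ N, Z₁ n ≤ Z₂ n) → x₁ ≤ x₂) ∧
    (∀ Z x xx : V → ℤ, IsLauferOf I N Z x → IsLauferOf I N x xx → xx = x) ∧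
    (∀ (Z x : V → ℤ) (Z' : V → ℚ), IsLauferOf I N Z x →
      (∀ n ∈ N, Z' n = (Z n : ℚ)) →
      (∀ v ∉ N, ∑ w, (I v w : ℚ) * Z' w = 0) →
      (∀ v, Z' v ≤ (x v : ℚ)) ∧
      ((∀ v, ∃ m : ℤ, Z' v = (m : ℚ)) → ∀ v, Z' v = (x v : ℚ))) := by
  refine ⟨?_, ?_, ?_⟩
  · -- monotonicity
    rintro Z₁ Z₂ x₁ x₂ ⟨h1N, h1E, h1min⟩ ⟨h2N, h2E, h2min⟩ hZ
    set y : V → ℤ := fun v => min (x₁ v) (x₂ v) with hy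
    have hyN : ∀ n ∈ N, y n = Z₁ n := by
      intro n hn
      simp [hy, h1N n hn, h2N n hn, min_eq_left (hZ n hn)]
    have hyE : ∀ v ∉ N, ∑ w, I v w * y w ≤ 0 := by
      intro v hv
      have key : ∀ x : V → ℤ, y v = x v → (∀ w, y w ≤ x w) →
          (∑ w, I v w * x w ≤ 0) → ∑ w, I v w * y w ≤ 0 := by
        intro x hv' hle hx
        refine le_trans (Finset.sum_le_sum fun w _ => ?_) hx
        rcases eq_or_ne v w with rfl | hvw
        · rw [hv']
        · exact mul_le_mul_of_nonneg_left (hle w) (hoff v w hvw)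
      rcases le_total (x₁ v) (x₂ v) with h | h
      · exact key x₁ (min_eq_left h) (fun w => min_le_left _ _) (h1E v hv)
      · exact key x₂ (min_eq_right h) (fun w => min_le_right _ _) (h2E v hv)
    intro v
    exact le_trans (h1min y hyN hyE v) (min_le_right _ _)
  · -- idempotence
    rintro Z x xx ⟨hxN, hxE, hxmin⟩ ⟨hxxN, hxxE, hxxmin⟩
    have h1 : xx ≤ x := hxxmin x (fun n _ => rfl) hxE
    have h2 : x ≤ xx := hxmin xx (fun n hn => (hxxN n hn).trans (hxN n hn)) hxxE
    exact le_antisymm h1 h2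
  · -- part 3
    rintro Z x Z' ⟨hxN, hxE, hxmin⟩ hZ'N hZ'E
    have hle : ∀ v, Z' v ≤ (x v : ℚ) := by
      have := laufer_pos_key I hoff hnegdef N (fun v => (x v : ℚ) - Z' v)
        (fun n hn => by show (x n : ℚ) - Z' n = 0; rw [hZ'N n hn, hxN n hn]; ring)
        (fun v hv => by
          have h1 : ∑ w, (I v w : ℚ) * ((x w : ℚ) - Z' w)
              = (∑ w, (I v w : ℚ) * (x w : ℚ)) - ∑ w, (I v w : ℚ) * Z' w := by
            rw [← Finset.sum_sub_distrib]; apply Finset.sum_congr rfl; intros; ring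
          rw [h1, hZ'E v hv, sub_zero]
          have := hxE v hv
          have : ((∑ w, I v w * x w : ℤ) : ℚ) ≤ 0 := by exact_mod_cast this
          push_cast at this
          convert this using 2)
      intro v
      have h := this v
      linarith
    refine ⟨hle, ?_⟩
    intro hint v
    choose m hm using hint
    have hmle : x ≤ m := by
      apply hxmin
      · intro n hn
        have := hZ'N n hn
        rw [hm n] at this
        exact_mod_cast this
      · intro v hv
        have := hZ'E v hv
        have h2 : ((∑ w, I v w * m w : ℤ) : ℚ) = 0 := by
          push_cast
          rw [← this]
          apply Finset.sum_congr rfl; intro w _; rw [hm w]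
        have : (∑ w, I v w * m w : ℤ) = 0 := by exact_mod_cast h2
        exact le_of_eq this
    have h1 := hle v
    have h2 : (x v : ℚ) ≤ (m v : ℚ) := by exact_mod_cast hmle v
    rw [hm v] at h1 ⊢
    exact le_antisymm h1 h2
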